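/- For any z = (z↑, z↓) ∈ 𝕋⁶ unbiased to all six columns of F^T(a,b) (a, b ∈ 𝕋), the value K(z) = (1/486)·∑_{j=0}^{2}(⟨z↑, f_j⟩·⟨c_j f_j, z↓⟩)² is a real number satisfying K(z) < −1/30. -/

import Mathlib

open Finset

noncomputable def omega3 : ℂ := Complex.exp (2 * Real.pi * Complex.I / 3)

noncomputable def fvec : Fin 3 → Fin 3 → ℂ :=
  ![![1, 1, 1], ![1, omega3, (starRingEnd ℂ) omega3], ![1, (starRingEnd ℂ) omega3, omega3]]

/-- The parameters `(c₀,c₁,c₂) = (1,a,b)`. -/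
noncomputable def cpar (a b : ℂ) : Fin 3 → ℂ := ![1, a, b]

/-- The columns of `F^T(a,b)`: `(f_j, ±c_j f_j)` for `j = 0,1,2`. -/
noncomputable def FTcol (a b : ℂ) (j : Fin 3) (ε : Bool) : Fin 6 → ℂ :=
  Fin.append (fvec j) (fun i => (if ε then 1 else -1) * cpar a b j * fvec j i)

/-- The second witness function
`K(z) = (1/486)·∑_j (⟨z↑,f_j⟩·⟨c_j f_j, z↓⟩)²`. -/
noncomputable def Kfun (a b : ℂ) (zu zd : Fin 3 → ℂ) : ℂ :=
  (1 / 486) * ∑ j : Fin 3,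
    ((∑ i : Fin 3, zu i * (starRingEnd ℂ) (fvec j i)) *
      (∑ i : Fin 3, cpar a b j * fvec j i * (starRingEnd ℂ) (zd i))) ^ 2


local notation "cj" => starRingEnd ℂ

lemma omega3_pow_three : omega3 ^ 3 = 1 := by
  rw [omega3, ← Complex.exp_nat_mul]
  rw [show (3:ℕ) * (2 * ↑Real.pi * Complex.I / 3) = 2 * ↑Real.pi * Complex.I by push_cast; ring]
  exact Complex.exp_two_pi_mul_I

lemma omega3_ne_one : omega3 ≠ 1 := by
  rw [omega3]
  intro h
  rw [Complex.exp_eq_one_iff] at h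
  obtain ⟨n, hn⟩ := h
  have hpi : (Real.pi : ℂ) ≠ 0 := by exact_mod_cast Real.pi_ne_zero
  have hne : (2 * (Real.pi:ℂ) * Complex.I) ≠ 0 := by
    simp [hpi, Complex.I_ne_zero]
  have key : (2*(Real.pi:ℂ)*Complex.I) * 1 = (2*(Real.pi:ℂ)*Complex.I) * (3*n) := by
    linear_combination 3 * hn
  have h3 : (1 : ℂ) = 3 * n := mul_left_cancel₀ hne key
  have : (1 : ℤ) = 3 * n := by exact_mod_cast h3
  omega

lemma omega3_ne_zero : omega3 ≠ 0 := Complex.exp_ne_zero _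

lemma omega3_rel : omega3 ^ 2 + omega3 + 1 = 0 := by
  have h := omega3_pow_three
  have h2 := omega3_ne_one
  have hh : (omega3 - 1) * (omega3 ^ 2 + omega3 + 1) = 0 := by linear_combination h
  rcases mul_eq_zero.mp hh with h3 | h3
  · exact absurd (by linear_combination h3) h2
  · exact h3

lemma omega3_mul_conj : omega3 * cj omega3 = 1 := by
  have habs : ‖omega3‖ = 1 := by
    rw [omega3, show 2 * (Real.pi:ℂ) * Complex.I / 3 = (2 * Real.pi / 3 : ℝ) * Complex.I by
      push_cast; ring, Complex.norm_exp_ofReal_mul_I]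
  have : Complex.normSq omega3 = 1 := by
    rw [Complex.normSq_eq_norm_sq, habs]; norm_num
  rw [Complex.mul_conj]; exact_mod_cast this

lemma omega3_conj : cj omega3 = omega3 ^ 2 := by
  have h3 := omega3_pow_three
  have hm := omega3_mul_conj
  linear_combination omega3 ^ 2 * hm - cj omega3 * h3
lemma key1 (x0 x1 x2 y0 y1 y2 : ℂ) (h0 : x0*y0 = 1) (h1 : x1*y1 = 1) (h2 : x2*y2 = 1) :
    (x0+x1+x2)*(y0+y1+y2) = 3 + (x0*y1+x1*y2+x2*y0) + (y0*x1+y1*x2+y2*x0) := by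
  linear_combination ((1 : ℂ)) * h0 + ((1 : ℂ)) * h1 + ((1 : ℂ)) * h2

lemma key2 (x0 x1 x2 y0 y1 y2 w : ℂ) (h0 : x0*y0 = 1) (h1 : x1*y1 = 1)
    (h2 : x2*y2 = 1) (hw : w^2 + w + 1 = 0) :
    (x0 + w^2*x1 + w*x2)*(y0 + w^4*y1 + w^2*y2)
      = 3 + w*(x0*y1+x1*y2+x2*y0) + w^2*(y0*x1+y1*x2+y2*x0) := by
  linear_combination ((1 : ℂ)) * h0 + (w^6) * h1 + (w^3) * h2 + ((-2 : ℂ) + (2 : ℂ)*w + (-1 : ℂ)*w^3 + w^4 + (-1 : ℂ)*x2*y1*w^2 + x2*y1*w^3 + (-1 : ℂ)*x1*y2*w + x1*y2*w^2 + (-1 : ℂ)*x0*y1*w + x0*y1*w^2) * hw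

lemma key3 (x0 x1 x2 y0 y1 y2 w : ℂ) (h0 : x0*y0 = 1) (h1 : x1*y1 = 1)
    (h2 : x2*y2 = 1) (hw : w^2 + w + 1 = 0) :
    (x0 + w*x1 + w^2*x2)*(y0 + w^2*y1 + w^4*y2)
      = 3 + w^2*(x0*y1+x1*y2+x2*y0) + w*(y0*x1+y1*x2+y2*x0) := by
  linear_combination ((1 : ℂ)) * h0 + (w^3) * h1 + (w^6) * h2 + ((-2 : ℂ) + (2 : ℂ)*w + (-1 : ℂ)*w^3 + w^4 + (-1 : ℂ)*x2*y1*w + x2*y1*w^2 + (-1 : ℂ)*x1*y2*w^2 + x1*y2*w^3 + (-1 : ℂ)*x0*y2*w + x0*y2*w^2) * hw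

lemma key4 (x0 x1 w : ℂ) (hw : w^2 + w + 1 = 0) :
    (3+x0+x1)^2 + (3+w*x0+w^2*x1)^2 + (3+w^2*x0+w*x1)^2 = 27 + 6*x0*x1 := by
  linear_combination ((6 : ℂ)*x1 + x1^2 + (-1 : ℂ)*x1^2*w + x1^2*w^2 + (6 : ℂ)*x0 + (-4 : ℂ)*x0*x1 + (4 : ℂ)*x0*x1*w + x0^2 + (-1 : ℂ)*x0^2*w + x0^2*w^2) * hw

lemma key4s (x0 x1 w : ℂ) (hw : w^2 + w + 1 = 0) :
    (3+x0+x1) + (3+w*x0+w^2*x1) + (3+w^2*x0+w*x1) = 9 := by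
  linear_combination (x1 + x0) * hw

lemma key5 (x0 x1 x2 y0 y1 y2 : ℂ) (h0 : x0*y0 = 1) (h1 : x1*y1 = 1) (h2 : x2*y2 = 1) :
    ((x0*y1+x1*y2+x2*y0)*(y0*x1+y1*x2+y2*x0))^2 + 18*((x0*y1+x1*y2+x2*y0)*(y0*x1+y1*x2+y2*x0))
      - 4*(x0*y1+x1*y2+x2*y0)^3 - 4*(y0*x1+y1*x2+y2*x0)^3 - 27
      = -(((x0*y1-x1*y2)*(x1*y0-x2*y1)) * ((x1*y2-x2*y0)*(x2*y1-x0*y2)) * ((x2*y0-x0*y1)*(x0*y2-x1*y0))) := by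
  linear_combination ((18 : ℂ)*x2*y2 + x2^2*y2^2 + (-12 : ℂ)*x2^2*y0*y1 + (2 : ℂ)*x2^3*y1^3 + (2 : ℂ)*x2^3*y0*y1*y2 + x2^4*y1^3*y2 + (18 : ℂ)*x1*y1 + (-44 : ℂ)*x1*x2*y1*y2 + (5 : ℂ)*x1*x2^2*y1*y2^2 + (4 : ℂ)*x1*x2^2*y0*y1^2 + (2 : ℂ)*x1*x2^2*y0^2*y2 + x1*x2^3*y1*y2^3 + x1*x2^3*y1^4 + (-1 : ℂ)*x1*x2^4*y0*y1^2*y2^2 + (-1 : ℂ)*x1*x2^4*y0^2*y1^3 + x1^2*y1^2 + (-12 : ℂ)*x1^2*y0*y2 + (5 : ℂ)*x1^2*x2*y1^2*y2 + (4 : ℂ)*x1^2*x2*y0*y2^2 + (2 : ℂ)*x1^2*x2*y0^2*y1 + (-1 : ℂ)*x1^2*x2^2*y0*y2^3 + (-1 : ℂ)*x1^2*x2^2*y0*y1^3 + (-1 : ℂ)*x1^2*x2^2*y0^2*y1*y2 + x1^2*x2^3*y1^2*y2^3 + x1^2*x2^3*y0^3*y1^2 + (2 : ℂ)*x1^3*y2^3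 + (2 : ℂ)*x1^3*y0*y1*y2 + x1^3*x2*y2^4 + x1^3*x2*y1^3*y2 + x1^3*x2^2*y1^3*y2^2 + x1^3*x2^2*y0^3*y2^2 + x1^4*y1*y2^3 + (-1 : ℂ)*x1^4*x2*y0*y1^2*y2^2 + (-1 : ℂ)*x1^4*x2*y0^2*y2^3 + (-12 : ℂ)*x0*x2*y1^2 + (4 : ℂ)*x0*x2^2*y1^2*y2 + x0*x2^2*y0*y2^2 + (-1 : ℂ)*x0*x2^3*y1^2*y2^2 + x0*x2^4*y0*y1^3*y2 + (-12 : ℂ)*x0*x1*y2^2 + (2 : ℂ)*x0*x1*x2*y2^3 + (2 : ℂ)*x0*x1*x2*y1^3 + (4 : ℂ)*x0*x1*x2*y0*y1*y2 + x0*x1*x2^2*y0*y1*y2^2 + x0*x1*x2^3*y0*y1*y2^3 + x0*x1*x2^3*y0*y1^4 + (4 : ℂ)*x0*x1^2*y1*y2^2 + x0*x1^2*y0*y1^2 + x0*x1^2*x2*y0*y1^2*y2 + (-1 : ℂ)*x0*x1^2*x2^2*y1*y2^4 + (-1 : ℂ)*x0*x1^2*x2^2*y1^4*y2 + (-1 :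 ℂ)*x0*x1^2*x2^2*y0^2*y2^3 + (-1 : ℂ)*x0*x1^2*x2^2*y0^2*y1^3 + (-1 : ℂ)*x0*x1^2*x2^2*y0^3*y1*y2 + (-1 : ℂ)*x0*x1^3*y1^2*y2^2 + x0*x1^3*x2*y0*y2^4 + x0*x1^3*x2*y0*y1^3*y2 + x0*x1^4*y0*y1*y2^3 + (2 : ℂ)*x0^2*x2*y1*y2^2 + (-1 : ℂ)*x0^2*x2^3*y1^4*y2 + (-1 : ℂ)*x0^2*x2^3*y0*y1^2*y2^2 + (2 : ℂ)*x0^2*x1*y1^2*y2 + (-1 : ℂ)*x0^2*x1*x2*y1^2*y2^2 + x0^2*x1*x2^2*y0^2*y1*y2^2 + x0^2*x1^2*x2*y0^2*y1^2*y2 + (-1 : ℂ)*x0^2*x1^3*y1*y2^4 + (-1 : ℂ)*x0^2*x1^3*y0*y1^2*y2^2 + x0^3*x2^2*y1^3*y2^2 + (-1 : ℂ)*x0^3*x1*x2*y0*y1^2*y2^2 + x0^3*x1^2*y1^2*y2^3) * h0 + ((19 : ℂ) + (-20 : ℂ)*x2*y2 + (7 : ℂ)*x2^2*y2^2 + (-9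 : ℂ)*x2^2*y0*y1 + (2 : ℂ)*x2^3*y2^3 + x2^3*y1^3 + (2 : ℂ)*x2^3*y0*y1*y2 + (3 : ℂ)*x2^3*y0^3 + (-1 : ℂ)*x2^4*y0*y1*y2^2 + (-1 : ℂ)*x2^4*y0^2*y1^2 + x2^4*y0^3*y2 + x1*y1 + (6 : ℂ)*x1*x2*y1*y2 + (-10 : ℂ)*x1*x2*y0^2 + (2 : ℂ)*x1*x2^2*y1*y2^2 + (-1 : ℂ)*x1*x2^2*y0*y1^2 + (3 : ℂ)*x1*x2^2*y0^2*y2 + x1*x2^3*y1*y2^3 + (-1 : ℂ)*x1*x2^3*y0^2*y2^2 + x1*x2^3*y0^3*y1 + x1*x2^4*y0^3*y1*y2 + (2 : ℂ)*x1^2*y0*y2 + x1^2*x2*y1^2*y2 + x1^2*x2*y0*y2^2 + x1^2*x2^2*y1^2*y2^2 + (-1 : ℂ)*x1^2*x2^3*y0^2*y1*y2^2 + (-1 : ℂ)*x1^2*x2^3*y0^4*y2 + x1^3*y2^3 + (-1 : ℂ)*x1^3*x2*y0*y1*y2^2 + x1^3*x2^2*y0^3*y2^2 + (2 : ℂ)*x0*x2*y1^2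 + x0*x2^2*y1^2*y2 + (-9 : ℂ)*x0*x1*y2^2 + (2 : ℂ)*x0*x1*x2*y2^3 + (-1 : ℂ)*x0*x1*x2^2*y2^4 + (-1 : ℂ)*x0*x1*x2^2*y1^3*y2 + (-1 : ℂ)*x0*x1^2*y1*y2^2 + (-10 : ℂ)*x0^2*y1*y2 + (3 : ℂ)*x0^2*x2*y1*y2^2 + (-1 : ℂ)*x0^2*x2^2*y1*y2^3 + (-1 : ℂ)*x0^2*x1*x2^2*y1^2*y2^3 + (-1 : ℂ)*x0^2*x1^2*y2^4 + (3 : ℂ)*x0^3*y2^3 + x0^3*x2*y2^4 + x0^3*x2^2*y1^3*y2^2 + x0^3*x1*y1*y2^3 + x0^3*x1*x2*y1*y2^4 + (-1 : ℂ)*x0^4*x2*y1^2*y2^3) * h1 + ((8 : ℂ) + (10 : ℂ)*x2*y2 + (2 : ℂ)*x2^2*y2^2 + (3 : ℂ)*x2^2*y0*y1 + x2^3*y1^3 + (-1 : ℂ)*x2^3*y0*y1*y2 + x2^3*y0^3 + (-8 : ℂ)*x1*x2*y0^2 + (-1 : ℂ)*x1*x2^2*y0^2*y2 + (-8 : ℂ)*x1^2*y0*y2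 + (-1 : ℂ)*x1^2*x2*y0*y2^2 + (-1 : ℂ)*x1^2*x2^2*y0^4 + x1^3*y2^3 + (4 : ℂ)*x1^3*y0^3 + (2 : ℂ)*x1^3*x2*y0^3*y2 + (-1 : ℂ)*x1^4*y0^2*y2^2 + (-8 : ℂ)*x0*x2*y1^2 + (-1 : ℂ)*x0*x2^2*y1^2*y2 + (3 : ℂ)*x0*x1*y2^2 + (-1 : ℂ)*x0*x1*x2*y2^3 + (-8 : ℂ)*x0^2*y1*y2 + (-1 : ℂ)*x0^2*x2*y1*y2^2 + (-1 : ℂ)*x0^2*x2^2*y1^4 + x0^3*y2^3 + (4 : ℂ)*x0^3*y1^3 + (2 : ℂ)*x0^3*x2*y1^3*y2 + (-1 : ℂ)*x0^4*y1^2*y2^2) * h2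

/-- The DFT-type inner products. -/
noncomputable def Uv (z : Fin 3 → ℂ) (j : Fin 3) : ℂ := ∑ i : Fin 3, z i * cj (fvec j i)

noncomputable def Sfun (z : Fin 3 → ℂ) : ℂ :=
  z 0 * cj (z 1) + z 1 * cj (z 2) + z 2 * cj (z 0)

noncomputable def Tfun (z : Fin 3 → ℂ) : ℂ :=
  cj (z 0) * z 1 + cj (z 1) * z 2 + cj (z 2) * z 0

lemma Uv0 (z : Fin 3 → ℂ) : Uv z 0 = z 0 + z 1 + z 2 := by
  rw [Uv, Fin.sum_univ_three]
  have e0 : fvec 0 0 = 1 := rfl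
  have e1 : fvec 0 1 = 1 := rfl
  have e2 : fvec 0 2 = 1 := rfl
  rw [e0, e1, e2, map_one]; ring

lemma Uv1 (z : Fin 3 → ℂ) : Uv z 1 = z 0 + omega3^2 * z 1 + omega3 * z 2 := by
  rw [Uv, Fin.sum_univ_three]
  have e0 : fvec 1 0 = 1 := rfl
  have e1 : fvec 1 1 = omega3 := rfl
  have e2 : fvec 1 2 = cj omega3 := rfl
  rw [e0, e1, e2, map_one, Complex.conj_conj, omega3_conj]; ring

lemma Uv2 (z : Fin 3 → ℂ) : Uv z 2 = z 0 + omega3 * z 1 + omega3^2 * z 2 := by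
  rw [Uv, Fin.sum_univ_three]
  have e0 : fvec 2 0 = 1 := rfl
  have e1 : fvec 2 1 = cj omega3 := rfl
  have e2 : fvec 2 2 = omega3 := rfl
  rw [e0, e1, e2, map_one, Complex.conj_conj, omega3_conj]; ring

lemma conj_Uv0 (z : Fin 3 → ℂ) : cj (Uv z 0) = cj (z 0) + cj (z 1) + cj (z 2) := by
  rw [Uv0]; simp only [map_add]

lemma conj_Uv1 (z : Fin 3 → ℂ) :
    cj (Uv z 1) = cj (z 0) + omega3^4 * cj (z 1) + omega3^2 * cj (z 2) := by
  rw [Uv1]; simp only [map_add, map_mul, map_pow, omega3_conj]; ring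

lemma conj_Uv2 (z : Fin 3 → ℂ) :
    cj (Uv z 2) = cj (z 0) + omega3^2 * cj (z 1) + omega3^4 * cj (z 2) := by
  rw [Uv2]; simp only [map_add, map_mul, map_pow, omega3_conj]; ring

lemma mulconj_Uv0 (z : Fin 3 → ℂ) (h : ∀ i, z i * cj (z i) = 1) :
    Uv z 0 * cj (Uv z 0) = 3 + Sfun z + Tfun z := by
  rw [conj_Uv0, Uv0, Sfun, Tfun]
  exact key1 _ _ _ _ _ _ (h 0) (h 1) (h 2)

lemma mulconj_Uv1 (z : Fin 3 → ℂ) (h : ∀ i, z i * cj (z i) = 1) :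
    Uv z 1 * cj (Uv z 1) = 3 + omega3 * Sfun z + omega3^2 * Tfun z := by
  rw [conj_Uv1, Uv1, Sfun, Tfun]
  exact key2 _ _ _ _ _ _ _ (h 0) (h 1) (h 2) omega3_rel

lemma mulconj_Uv2 (z : Fin 3 → ℂ) (h : ∀ i, z i * cj (z i) = 1) :
    Uv z 2 * cj (Uv z 2) = 3 + omega3^2 * Sfun z + omega3 * Tfun z := by
  rw [conj_Uv2, Uv2, Sfun, Tfun]
  exact key3 _ _ _ _ _ _ _ (h 0) (h 1) (h 2) omega3_rel

lemma Tfun_eq_conj (z : Fin 3 → ℂ) : Tfun z = cj (Sfun z) := by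
  rw [Sfun, Tfun]
  simp only [map_add, map_mul, Complex.conj_conj]
  try ring

lemma disc_ineq (z : Fin 3 → ℂ) (h : ∀ i, z i * cj (z i) = 1) :
    (Sfun z * Tfun z)^2 + 18*(Sfun z * Tfun z) - 4*(Sfun z)^3 - 4*(Tfun z)^3 - 27
      = -(((Complex.normSq (z 0 * cj (z 1) - z 1 * cj (z 2))
          * Complex.normSq (z 1 * cj (z 2) - z 2 * cj (z 0))
          * Complex.normSq (z 2 * cj (z 0) - z 0 * cj (z 1)) : ℝ) : ℂ)) := by
  have hd : ∀ (i k l m : Fin 3),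
      (z i * cj (z k) - z l * cj (z m)) * (z k * cj (z i) - z m * cj (z l))
        = ((Complex.normSq (z i * cj (z k) - z l * cj (z m)) : ℝ) : ℂ) := by
    intro i k l m
    rw [← Complex.mul_conj]
    congr 1
    simp only [map_sub, map_mul, Complex.conj_conj]; ring
  have h5 := key5 (z 0) (z 1) (z 2) (cj (z 0)) (cj (z 1)) (cj (z 2)) (h 0) (h 1) (h 2)
  have hv0 := hd 0 1 1 2
  have hv1 := hd 1 2 2 0
  have hv2 := hd 2 0 0 1
  rw [Sfun, Tfun]
  push_cast
  linear_combination h5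
    - ((z 1 * cj (z 2) - z 2 * cj (z 0)) * (z 2 * cj (z 1) - z 0 * cj (z 2))
        * ((z 2 * cj (z 0) - z 0 * cj (z 1)) * (z 0 * cj (z 2) - z 1 * cj (z 0)))) * hv0
    - (((Complex.normSq (z 0 * cj (z 1) - z 1 * cj (z 2)) : ℝ) : ℂ)
        * ((z 2 * cj (z 0) - z 0 * cj (z 1)) * (z 0 * cj (z 2) - z 1 * cj (z 0)))) * hv1
    - (((Complex.normSq (z 0 * cj (z 1) - z 1 * cj (z 2)) : ℝ) : ℂ)
        * ((Complex.normSq (z 1 * cj (z 2) - z 2 * cj (z 0)) : ℝ) : ℂ)) * hv2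

lemma re_zero_sq (z : ℂ) (h : z.re = 0) : z ^ 2 = -((Complex.normSq z : ℝ) : ℂ) := by
  apply Complex.ext <;>
    simp [pow_two, Complex.mul_re, Complex.mul_im, Complex.normSq_apply, h]

lemma inner_split (a b : ℂ) (zu zd : Fin 3 → ℂ) (j : Fin 3) (ε : Bool) :
    (∑ i : Fin 6, Fin.append zu zd i * cj (FTcol a b j ε i))
    = Uv zu j + (if ε then 1 else -1) * cj (cpar a b j) * Uv zd j := by
  have h6 : (∑ i : Fin 6, Fin.append zu zd i * cj (FTcol a b j ε i))
      = ∑ i : Fin (3+3), Fin.append zu zd i * cj (FTcol a b j ε i) := rfl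
  rw [h6, Fin.sum_univ_add, Uv, Uv]
  simp only [FTcol, Fin.append_left, Fin.append_right, map_mul, Finset.mul_sum]
  congr 1
  apply Finset.sum_congr rfl
  intro i _
  cases ε <;> simp <;> ring

lemma factor2 (a b : ℂ) (z : Fin 3 → ℂ) (j : Fin 3) :
    (∑ i : Fin 3, cpar a b j * fvec j i * cj (z i)) = cpar a b j * cj (Uv z j) := by
  simp only [Uv, map_sum, map_mul, Complex.conj_conj, Finset.mul_sum]
  apply Finset.sum_congr rfl
  intro i _
  ring

/-- For any `z = (z↑,z↓) ∈ 𝕋⁶` unbiased to all six columns of `F^T(a,b)`,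
`K(z)` is real and `K(z) < -1/30`. -/
theorem Kfun_lt_of_unbiased (a b : ℂ) (ha : ‖a‖ = 1) (hb : ‖b‖ = 1)
    (zu zd : Fin 3 → ℂ)
    (hzu : ∀ i : Fin 3, ‖zu i‖ = 1) (hzd : ∀ i : Fin 3, ‖zd i‖ = 1)
    (hunb : ∀ (j : Fin 3) (ε : Bool),
      Complex.normSq (∑ i : Fin 6, Fin.append zu zd i * (starRingEnd ℂ) (FTcol a b j ε i)) = 6) :
    (Kfun a b zu zd).im = 0 ∧ (Kfun a b zu zd).re < -1 / 30 := by

  classical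
  have hx : ∀ i, zu i * cj (zu i) = 1 := by
    intro i; rw [Complex.mul_conj]
    have : Complex.normSq (zu i) = 1 := by
      rw [Complex.normSq_eq_norm_sq, hzu i]; norm_num
    rw [this]; norm_num
  have hp : ∀ i, zd i * cj (zd i) = 1 := by
    intro i; rw [Complex.mul_conj]
    have : Complex.normSq (zd i) = 1 := by
      rw [Complex.normSq_eq_norm_sq, hzd i]; norm_num
    rw [this]; norm_num
  have hncpar : ∀ j : Fin 3, Complex.normSq (cpar a b j) = 1 := by
    intro j
    fin_cases j <;>
      simp [cpar, Complex.normSq_eq_norm_sq, ha, hb]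
  have hcpar : ∀ j : Fin 3, cpar a b j * cj (cpar a b j) = 1 := by
    intro j; rw [Complex.mul_conj, hncpar j]; norm_num
  have tocomplex : ∀ e : ℂ, Complex.normSq e = 6 → e * cj e = 6 := by
    intro e he; rw [Complex.mul_conj, he]; norm_num
  -- main consequences of unbiasedness
  have hmain : ∀ j : Fin 3,
      Uv zu j * cj (Uv zu j) + Uv zd j * cj (Uv zd j) = 6
      ∧ (Uv zu j * (cpar a b j * cj (Uv zd j))).re = 0 := by
    intro j
    have h1 := hunb j true
    have h2 := hunb j false
    rw [inner_split] at h1 h2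
    have hif1 : (if (true : Bool) then (1:ℂ) else -1) = 1 := rfl
    have hif2 : (if (false : Bool) then (1:ℂ) else -1) = -1 := rfl
    rw [hif1] at h1
    rw [hif2] at h2
    have E1 := tocomplex _ h1
    have E2 := tocomplex _ h2
    simp only [map_add, map_mul, map_neg, map_one, Complex.conj_conj, one_mul] at E1 E2
    have hc := hcpar j
    refine ⟨by linear_combination (1/2 : ℂ) * E1 + (1/2 : ℂ) * E2
        - (Uv zd j * cj (Uv zd j)) * hc, ?_⟩
    have hWc : Uv zu j * (cpar a b j * cj (Uv zd j))
        + cj (Uv zu j * (cpar a b j * cj (Uv zd j))) = 0 := by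
      simp only [map_mul, Complex.conj_conj]
      linear_combination (1/2 : ℂ) * E1 - (1/2 : ℂ) * E2
    have hac := Complex.add_conj (Uv zu j * (cpar a b j * cj (Uv zd j)))
    rw [hWc] at hac
    have h2r : (0:ℝ) = 2 * (Uv zu j * (cpar a b j * cj (Uv zd j))).re := by
      exact_mod_cast hac
    linarith
  -- value of Kfun
  have hterm : ∀ j : Fin 3,
      (Uv zu j * (cpar a b j * cj (Uv zd j))) ^ 2
        = -(((Complex.normSq (Uv zu j) * Complex.normSq (Uv zd j) : ℝ) : ℂ)) := by
    intro j
    rw [re_zero_sq _ (hmain j).2, Complex.normSq_mul, Complex.normSq_mul,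
      Complex.normSq_conj, hncpar j]
    push_cast; ring
  have hKval : Kfun a b zu zd
      = ((-(1/486) * (Complex.normSq (Uv zu 0) * Complex.normSq (Uv zd 0)
          + Complex.normSq (Uv zu 1) * Complex.normSq (Uv zd 1)
          + Complex.normSq (Uv zu 2) * Complex.normSq (Uv zd 2)) : ℝ) : ℂ) := by
    rw [Kfun]
    have hK2 : ∀ j : Fin 3,
        ((∑ i : Fin 3, zu i * cj (fvec j i)) *
          (∑ i : Fin 3, cpar a b j * fvec j i * cj (zd i))) ^ 2
        = (Uv zu j * (cpar a b j * cj (Uv zd j))) ^ 2 := by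
      intro j
      rw [factor2]
      rfl
    rw [Fin.sum_univ_three, hK2 0, hK2 1, hK2 2, hterm 0, hterm 1, hterm 2]
    push_cast; ring
  refine ⟨by rw [hKval]; exact Complex.ofReal_im _, ?_⟩
  rw [hKval, Complex.ofReal_re]
  -- real notation
  set s0 : ℝ := Complex.normSq (Uv zu 0) with hs0d
  set s1 : ℝ := Complex.normSq (Uv zu 1) with hs1d
  set s2 : ℝ := Complex.normSq (Uv zu 2) with hs2d
  set t0 : ℝ := Complex.normSq (Uv zd 0) with ht0d
  set t1 : ℝ := Complex.normSq (Uv zd 1) with ht1d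
  set t2 : ℝ := Complex.normSq (Uv zd 2) with ht2d
  have hscast : ∀ j, ((Complex.normSq (Uv zu j) : ℝ) : ℂ) = Uv zu j * cj (Uv zu j) :=
    fun j => (Complex.mul_conj _).symm
  have htcast : ∀ j, ((Complex.normSq (Uv zd j) : ℝ) : ℂ) = Uv zd j * cj (Uv zd j) :=
    fun j => (Complex.mul_conj _).symm
  have hst : ∀ j, Complex.normSq (Uv zu j) + Complex.normSq (Uv zd j) = 6 := by
    intro j
    have hC : ((Complex.normSq (Uv zu j) + Complex.normSq (Uv zd j) : ℝ) : ℂ) = 6 := by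
      push_cast [hscast, htcast]
      exact (hmain j).1
    exact_mod_cast hC
  have hsum9 : s0 + s1 + s2 = 9 := by
    have hC : ((s0 + s1 + s2 : ℝ) : ℂ) = 9 := by
      rw [hs0d, hs1d, hs2d]
      push_cast [hscast]
      rw [mulconj_Uv0 zu hx, mulconj_Uv1 zu hx, mulconj_Uv2 zu hx]
      exact key4s _ _ _ omega3_rel
    exact_mod_cast hC
  set n : ℝ := Complex.normSq (Sfun zu) with hnd
  have hScTc : Sfun zu * Tfun zu = ((n : ℝ) : ℂ) := by
    rw [Tfun_eq_conj, Complex.mul_conj, hnd]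
  have hsumsq : s0^2 + s1^2 + s2^2 = 27 + 6 * n := by
    have hC : ((s0^2 + s1^2 + s2^2 : ℝ) : ℂ) = ((27 + 6 * n : ℝ) : ℂ) := by
      rw [hs0d, hs1d, hs2d]
      push_cast [hscast]
      rw [mulconj_Uv0 zu hx, mulconj_Uv1 zu hx, mulconj_Uv2 zu hx]
      rw [key4 (Sfun zu) (Tfun zu) omega3 omega3_rel]
      linear_combination 6 * hScTc
    exact_mod_cast hC
  -- Sd = -Sc, Td = -Tc
  have he0 : (Sfun zu + Sfun zd) + (Tfun zu + Tfun zd) = 0 := by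
    have h := (hmain 0).1
    rw [mulconj_Uv0 zu hx, mulconj_Uv0 zd hp] at h
    linear_combination h
  have he1 : omega3 * (Sfun zu + Sfun zd) + omega3^2 * (Tfun zu + Tfun zd) = 0 := by
    have h := (hmain 1).1
    rw [mulconj_Uv1 zu hx, mulconj_Uv1 zd hp] at h
    linear_combination h
  have hwne : omega3 - omega3^2 ≠ 0 := by
    intro h
    have hzz : omega3 * (1 - omega3) = 0 := by linear_combination h
    rcases mul_eq_zero.mp hzz with h' | h'
    · exact omega3_ne_zero h'
    · exact omega3_ne_one (by linear_combination -h')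
  have hSdval : Sfun zd = -Sfun zu := by
    have hPP : (Sfun zu + Sfun zd) * (omega3 - omega3^2) = 0 := by
      linear_combination he1 - omega3^2 * he0
    have := (mul_eq_zero.mp hPP).resolve_right hwne
    linear_combination this
  have hTdval : Tfun zd = -Tfun zu := by
    have hPP : (Sfun zu + Sfun zd) * (omega3 - omega3^2) = 0 := by
      linear_combination he1 - omega3^2 * he0
    have hP := (mul_eq_zero.mp hPP).resolve_right hwne
    linear_combination he0 - hP
  -- discriminant inequalities
  have hGu := disc_ineq zu hx
  have hGd := disc_ineq zd hp
  rw [hSdval, hTdval] at hGd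
  set νu : ℝ := Complex.normSq (zu 0 * cj (zu 1) - zu 1 * cj (zu 2))
      * Complex.normSq (zu 1 * cj (zu 2) - zu 2 * cj (zu 0))
      * Complex.normSq (zu 2 * cj (zu 0) - zu 0 * cj (zu 1)) with hνud
  set νd : ℝ := Complex.normSq (zd 0 * cj (zd 1) - zd 1 * cj (zd 2))
      * Complex.normSq (zd 1 * cj (zd 2) - zd 2 * cj (zd 0))
      * Complex.normSq (zd 2 * cj (zd 0) - zd 0 * cj (zd 1)) with hνdd
  have hcombC : ((2*n^2 + 36*n - 54 : ℝ) : ℂ) = ((-(νu + νd) : ℝ) : ℂ) := by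
    push_cast
    linear_combination hGu + hGd - (2*(Sfun zu * Tfun zu + ((n:ℝ):ℂ)) + 36) * hScTc
  have hcomb : 2*n^2 + 36*n - 54 = -(νu + νd) := by exact_mod_cast hcombC
  have hνu_nonneg : 0 ≤ νu := by
    rw [hνud]
    have := Complex.normSq_nonneg (zu 0 * cj (zu 1) - zu 1 * cj (zu 2))
    have := Complex.normSq_nonneg (zu 1 * cj (zu 2) - zu 2 * cj (zu 0))
    have := Complex.normSq_nonneg (zu 2 * cj (zu 0) - zu 0 * cj (zu 1))
    positivity
  have hνd_nonneg : 0 ≤ νd := by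
    rw [hνdd]
    have := Complex.normSq_nonneg (zd 0 * cj (zd 1) - zd 1 * cj (zd 2))
    have := Complex.normSq_nonneg (zd 1 * cj (zd 2) - zd 2 * cj (zd 0))
    have := Complex.normSq_nonneg (zd 2 * cj (zd 0) - zd 0 * cj (zd 1))
    positivity
  have hn_nonneg : 0 ≤ n := by rw [hnd]; exact Complex.normSq_nonneg _
  -- final arithmetic
  have h0 := hst 0
  have h1 := hst 1
  have h2 := hst 2
  rw [← hs0d, ← ht0d] at h0
  rw [← hs1d, ← ht1d] at h1
  rw [← hs2d, ← ht2d] at h2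
  have hprod : s0*t0 + s1*t1 + s2*t2 = 27 - 6*n := by
    linear_combination s0*h0 + s1*h1 + s2*h2 - hsumsq + 6*hsum9
  rw [hprod]
  nlinarith [hcomb, hνu_nonneg, hνd_nonneg, hn_nonneg, sq_nonneg n]
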